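/- Let (X, Y) be jointly Gaussian real random variables with mean zero, unit variances, and correlation ρ ∈ [−1, 1]. Then E[sign(X) sign(Y)] = (2/π) arcsin(ρ). -/

import Mathlib

open Real MeasureTheory ProbabilityTheory Set
open scoped ENNReal NNReal

/-- The one-bit quantizer: `sign a = +1` if `a ≥ 0`, `−1` otherwise. -/
noncomputable def obSign (a : ℝ) : ℝ := if 0 ≤ a then 1 else -1

lemma obSign_meas : Measurable obSign :=
  Measurable.ite measurableSet_Ici measurable_const measurable_const

lemma obSign_of_pos {a : ℝ} (h : 0 < a) : obSign a = 1 := if_pos h.le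

lemma obSign_of_neg {a : ℝ} (h : a < 0) : obSign a = -1 := if_neg (not_le.mpr h)

lemma abs_obSign (a : ℝ) : |obSign a| = 1 := by unfold obSign; split <;> simp

lemma obSign_smul {r a : ℝ} (hr : 0 < r) : obSign (r * a) = obSign a := by
  unfold obSign
  simp [mul_nonneg_iff_of_pos_left hr]

lemma step_integral {f : ℝ → ℝ} {c a b : ℝ} (hab : a ≤ b)
    (hf : ∀ x ∈ Set.Ioo a b, f x = c) : ∫ x in a..b, f x = c * (b - a) := by
  rw [intervalIntegral.integral_of_le hab, integral_Ioc_eq_integral_Ioo,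
    setIntegral_congr_fun measurableSet_Ioo hf, setIntegral_const, Real.volume_real_Ioo_of_le hab, smul_eq_mul, mul_comm]
lemma angular (α : ℝ) (h0 : 0 ≤ α) (hπ : α ≤ π) :
    (∫ θ in Set.Ioo (-π) π, obSign (Real.cos θ) * obSign (Real.cos (θ - α)))
      = 2 * π - 4 * α := by
  have pi_pos := Real.pi_pos
  set h : ℝ → ℝ := fun θ => obSign (Real.cos θ) * obSign (Real.cos (θ - α)) with hh
  have hmeas : Measurable h :=
    (obSign_meas.comp Real.measurable_cos).mul
      (obSign_meas.comp (Real.measurable_cos.comp (measurable_id.sub measurable_const)))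
  have hint : ∀ a b : ℝ, IntervalIntegrable h volume a b := by
    intro a b
    apply IntervalIntegrable.mono_fun' (g := fun _ => (1:ℝ)) intervalIntegrable_const
      hmeas.aestronglyMeasurable
    refine Filter.Eventually.of_forall fun x => ?_
    rw [hh]
    simp only [Real.norm_eq_abs, abs_mul, abs_obSign, mul_one, le_refl]
  -- sign computations helpers
  have cpos : ∀ x : ℝ, -(π/2) < x → x < π/2 → 0 < Real.cos x := fun x h1 h2 =>
    Real.cos_pos_of_mem_Ioo ⟨h1, h2⟩
  have cneg : ∀ x : ℝ, π/2 < x → x < π + π/2 → Real.cos x < 0 := fun x h1 h2 =>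
    Real.cos_neg_of_pi_div_two_lt_of_lt h1 h2
  have cnegneg : ∀ x : ℝ, -(π + π/2) < x → x < -(π/2) → Real.cos x < 0 := by
    intro x h1 h2
    have := cneg (-x) (by linarith) (by linarith)
    rwa [Real.cos_neg] at this
  have cpos2 : ∀ x : ℝ, -(2*π) < x → x < -(π + π/2) → 0 < Real.cos x := by
    intro x h1 h2
    have := cpos (x + 2*π) (by linarith) (by linarith)
    rwa [Real.cos_add_two_pi] at this
  have key : ∫ θ in Set.Ioo (-π) π, h θ = ∫ θ in (-π)..π, h θ := by
    rw [intervalIntegral.integral_of_le (by linarith), integral_Ioc_eq_integral_Ioo]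
  rw [key]
  rcases le_or_gt α (π/2) with hc | hc
  · -- α ∈ [0, π/2]
    rw [← intervalIntegral.integral_add_adjacent_intervals (hint (-π) (-(π/2))) (hint (-(π/2)) π),
        ← intervalIntegral.integral_add_adjacent_intervals (hint (-(π/2)) (α-π/2)) (hint (α-π/2) π),
        ← intervalIntegral.integral_add_adjacent_intervals (hint (α-π/2) (π/2)) (hint (π/2) π),
        ← intervalIntegral.integral_add_adjacent_intervals (hint (π/2) (α+π/2)) (hint (α+π/2) π)]
    have P1 : ∫ x in (-π)..(-(π/2)), h x = 1 * (-(π/2) - -π) := by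
      refine step_integral (by linarith) fun x hx => ?_
      obtain ⟨h1, h2⟩ := hx
      simp only [hh]
      rw [obSign_of_neg (cnegneg x (by linarith) (by linarith)),
          obSign_of_neg (cnegneg (x - α) (by linarith) (by linarith))]
      norm_num
    have P2 : ∫ x in (-(π/2))..(α-π/2), h x = (-1) * ((α-π/2) - -(π/2)) := by
      refine step_integral (by linarith) fun x hx => ?_
      obtain ⟨h1, h2⟩ := hx
      simp only [hh]
      rw [obSign_of_pos (cpos x (by linarith) (by linarith)),
          obSign_of_neg (cnegneg (x - α) (by linarith) (by linarith))]
      norm_num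
    have P3 : ∫ x in (α-π/2)..(π/2), h x = 1 * (π/2 - (α-π/2)) := by
      refine step_integral (by linarith) fun x hx => ?_
      obtain ⟨h1, h2⟩ := hx
      simp only [hh]
      rw [obSign_of_pos (cpos x (by linarith) (by linarith)),
          obSign_of_pos (cpos (x - α) (by linarith) (by linarith))]
      norm_num
    have P4 : ∫ x in (π/2)..(α+π/2), h x = (-1) * ((α+π/2) - π/2) := by
      refine step_integral (by linarith) fun x hx => ?_
      obtain ⟨h1, h2⟩ := hx
      simp only [hh]
      rw [obSign_of_neg (cneg x (by linarith) (by linarith)),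
          obSign_of_pos (cpos (x - α) (by linarith) (by linarith))]
      norm_num
    have P5 : ∫ x in (α+π/2)..π, h x = 1 * (π - (α+π/2)) := by
      refine step_integral (by linarith) fun x hx => ?_
      obtain ⟨h1, h2⟩ := hx
      simp only [hh]
      rw [obSign_of_neg (cneg x (by linarith) (by linarith)),
          obSign_of_neg (cneg (x - α) (by linarith) (by linarith))]
      norm_num
    rw [P1, P2, P3, P4, P5]; ring
  · -- α ∈ (π/2, π]
    rw [← intervalIntegral.integral_add_adjacent_intervals (hint (-π) (α-3*π/2)) (hint (α-3*π/2) π),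
        ← intervalIntegral.integral_add_adjacent_intervals (hint (α-3*π/2) (-(π/2))) (hint (-(π/2)) π),
        ← intervalIntegral.integral_add_adjacent_intervals (hint (-(π/2)) (α-π/2)) (hint (α-π/2) π),
        ← intervalIntegral.integral_add_adjacent_intervals (hint (α-π/2) (π/2)) (hint (π/2) π)]
    have P1 : ∫ x in (-π)..(α-3*π/2), h x = (-1) * ((α-3*π/2) - -π) := by
      refine step_integral (by linarith) fun x hx => ?_
      obtain ⟨h1, h2⟩ := hx
      simp only [hh]
      rw [obSign_of_neg (cnegneg x (by linarith) (by linarith)),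
          obSign_of_pos (cpos2 (x - α) (by linarith) (by linarith))]
      norm_num
    have P2 : ∫ x in (α-3*π/2)..(-(π/2)), h x = 1 * (-(π/2) - (α-3*π/2)) := by
      refine step_integral (by linarith) fun x hx => ?_
      obtain ⟨h1, h2⟩ := hx
      simp only [hh]
      rw [obSign_of_neg (cnegneg x (by linarith) (by linarith)),
          obSign_of_neg (cnegneg (x - α) (by linarith) (by linarith))]
      norm_num
    have P3 : ∫ x in (-(π/2))..(α-π/2), h x = (-1) * ((α-π/2) - -(π/2)) := by
      refine step_integral (by linarith) fun x hx => ?_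
      obtain ⟨h1, h2⟩ := hx
      simp only [hh]
      rw [obSign_of_pos (cpos x (by linarith) (by linarith)),
          obSign_of_neg (cnegneg (x - α) (by linarith) (by linarith))]
      norm_num
    have P4 : ∫ x in (α-π/2)..(π/2), h x = 1 * (π/2 - (α-π/2)) := by
      refine step_integral (by linarith) fun x hx => ?_
      obtain ⟨h1, h2⟩ := hx
      simp only [hh]
      rw [obSign_of_pos (cpos x (by linarith) (by linarith)),
          obSign_of_pos (cpos (x - α) (by linarith) (by linarith))]
      norm_num
    have P5 : ∫ x in (π/2)..π, h x = (-1) * (π - π/2) := by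
      refine step_integral (by linarith) fun x hx => ?_
      obtain ⟨h1, h2⟩ := hx
      simp only [hh]
      rw [obSign_of_neg (cneg x (by linarith) (by linarith)),
          obSign_of_pos (cpos (x - α) (by linarith) (by linarith))]
      norm_num
    rw [P1, P2, P3, P4, P5]; ring
lemma prod_gauss : (gaussianReal 0 1).prod (gaussianReal 0 1)
    = (volume : Measure (ℝ × ℝ)).withDensity
        (fun p => ((gaussianPDFReal 0 1 p.1 * gaussianPDFReal 0 1 p.2).toNNReal : ℝ≥0∞)) := by
  have hd : ∀ p : ℝ × ℝ, ((gaussianPDFReal 0 1 p.1 * gaussianPDFReal 0 1 p.2).toNNReal : ℝ≥0∞)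
      = gaussianPDF 0 1 p.1 * gaussianPDF 0 1 p.2 := by
    intro p
    rw [gaussianPDF, gaussianPDF, ← ENNReal.ofReal_mul (gaussianPDFReal_nonneg _ _ _)]
    rfl
  refine Measure.prod_eq fun s t hs ht => ?_
  rw [withDensity_apply _ (hs.prod ht)]
  simp_rw [hd]
  rw [gaussianReal_of_var_ne_zero 0 one_ne_zero,
    withDensity_apply _ hs, withDensity_apply _ ht,
    Measure.volume_eq_prod, ← Measure.prod_restrict,
    lintegral_prod_mul (f := gaussianPDF 0 1) (g := gaussianPDF 0 1)
      (measurable_gaussianPDF 0 1).aemeasurable (measurable_gaussianPDF 0 1).aemeasurable]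
lemma radial_integral : ∫ r in Set.Ioi (0:ℝ), r * Real.exp (-(r^2) / 2) = 1 := by
  have hderiv : ∀ x ∈ Set.Ioi (0:ℝ),
      HasDerivAt (fun r : ℝ => -Real.exp (-(r^2) / 2)) (x * Real.exp (-(x^2)/2)) x := by
    intro x _
    have h1 : HasDerivAt (fun r : ℝ => -(r^2) / 2) (-x) x := by
      exact (((hasDerivAt_pow 2 x).neg).div_const 2).congr_deriv (by norm_num; ring)
    have h2 := (h1.exp).neg
    exact h2.congr_deriv (by ring)
  have hpos : ∀ x ∈ Set.Ioi (0:ℝ), 0 ≤ x * Real.exp (-(x^2)/2) := fun x hx =>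
    mul_nonneg (le_of_lt hx) (Real.exp_pos _).le
  have hcont : ContinuousWithinAt (fun r : ℝ => -Real.exp (-(r^2) / 2)) (Set.Ici 0) 0 := by
    apply Continuous.continuousWithinAt
    fun_prop
  have htend : Filter.Tendsto (fun r : ℝ => -Real.exp (-(r^2) / 2)) Filter.atTop (nhds 0) := by
    rw [show (0:ℝ) = -0 by norm_num]
    apply Filter.Tendsto.neg
    apply Real.tendsto_exp_atBot.comp
    have h1 : Filter.Tendsto (fun r : ℝ => r^2) Filter.atTop Filter.atTop :=
      Filter.tendsto_pow_atTop two_ne_zero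
    have h2 := h1.atTop_mul_const_of_neg (show -(1/2 : ℝ) < 0 by norm_num)
    exact h2.congr fun r => by ring
  have := integral_Ioi_of_hasDerivAt_of_nonneg hcont hderiv hpos htend
  simpa using this

/-- arcsine / Grothendieck identity: if `(X, Y)` is a standard jointly
Gaussian pair with correlation `ρ ∈ [−1, 1]`, realized as `X = Z₁`,
`Y = ρ Z₁ + √(1−ρ²) Z₂` with `Z₁, Z₂` i.i.d. `N(0,1)`, then
`E[sign(X) sign(Y)] = (2/π) arcsin ρ`. -/
theorem stmt8 (ρ : ℝ) (hρ : ρ ∈ Set.Icc (-1 : ℝ) 1) :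
    (∫ z : ℝ × ℝ,
        obSign z.1 * obSign (ρ * z.1 + Real.sqrt (1 - ρ ^ 2) * z.2)
        ∂((gaussianReal 0 1).prod (gaussianReal 0 1)))
      = (2 / π) * Real.arcsin ρ := by
  obtain ⟨hρ1, hρ2⟩ := hρ
  have pi_pos := Real.pi_pos
  set α := Real.arccos ρ with hα
  have hα0 : 0 ≤ α := Real.arccos_nonneg ρ
  have hαπ : α ≤ π := Real.arccos_le_pi ρ
  have hcos : Real.cos α = ρ := Real.cos_arccos hρ1 hρ2
  have hsin : Real.sqrt (1 - ρ ^ 2) = Real.sin α := (Real.sin_arccos ρ).symm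
  have hmeasd : Measurable fun p : ℝ × ℝ =>
      (gaussianPDFReal 0 1 p.1 * gaussianPDFReal 0 1 p.2).toNNReal :=
    (((measurable_gaussianPDFReal 0 1).comp measurable_fst).mul
      ((measurable_gaussianPDFReal 0 1).comp measurable_snd)).real_toNNReal
  rw [prod_gauss, integral_withDensity_eq_integral_smul hmeasd]
  have hrw : ∀ p : ℝ × ℝ, ((gaussianPDFReal 0 1 p.1 * gaussianPDFReal 0 1 p.2).toNNReal : ℝ≥0)
      • (obSign p.1 * obSign (ρ * p.1 + Real.sqrt (1 - ρ ^ 2) * p.2))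
      = gaussianPDFReal 0 1 p.1 * gaussianPDFReal 0 1 p.2
        * (obSign p.1 * obSign (ρ * p.1 + Real.sqrt (1 - ρ ^ 2) * p.2)) := by
    intro p
    rw [NNReal.smul_def, Real.coe_toNNReal _
      (mul_nonneg (gaussianPDFReal_nonneg _ _ _) (gaussianPDFReal_nonneg _ _ _)), smul_eq_mul]
  simp_rw [hrw]
  rw [← integral_comp_polarCoord_symm (fun p : ℝ × ℝ =>
    gaussianPDFReal 0 1 p.1 * gaussianPDFReal 0 1 p.2
      * (obSign p.1 * obSign (ρ * p.1 + Real.sqrt (1 - ρ ^ 2) * p.2)))]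
  simp only [polarCoord_target, polarCoord_symm_apply]
  rw [setIntegral_congr_fun (measurableSet_Ioi.prod measurableSet_Ioo)
    (g := fun p : ℝ × ℝ => (p.1 * Real.exp (-(p.1 ^ 2) / 2))
      * ((2 * π)⁻¹ * (obSign (Real.cos p.2) * obSign (Real.cos (p.2 - α)))))
    (by
      rintro ⟨r, θ⟩ ⟨hr, hθ⟩
      simp only
      have hr' : (0:ℝ) < r := hr
      have hpdf : gaussianPDFReal 0 1 (r * Real.cos θ) * gaussianPDFReal 0 1 (r * Real.sin θ)
          = (2 * π)⁻¹ * Real.exp (-(r ^ 2) / 2) := by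
        simp only [gaussianPDFReal, NNReal.coe_one, mul_one, sub_zero]
        have e1 : (Real.sqrt (2 * π))⁻¹ * (Real.sqrt (2 * π))⁻¹ = (2 * π)⁻¹ := by
          rw [← mul_inv, Real.mul_self_sqrt (by positivity)]
        have e2 : Real.exp (-(r * Real.cos θ) ^ 2 / 2) * Real.exp (-(r * Real.sin θ) ^ 2 / 2)
            = Real.exp (-(r ^ 2) / 2) := by
          rw [← Real.exp_add]
          congr 1
          linear_combination (-(r ^ 2) / 2) * Real.sin_sq_add_cos_sq θ
        calc (Real.sqrt (2 * π))⁻¹ * Real.exp (-(r * Real.cos θ) ^ 2 / 2)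
              * ((Real.sqrt (2 * π))⁻¹ * Real.exp (-(r * Real.sin θ) ^ 2 / 2))
            = (Real.sqrt (2 * π))⁻¹ * (Real.sqrt (2 * π))⁻¹
              * (Real.exp (-(r * Real.cos θ) ^ 2 / 2) * Real.exp (-(r * Real.sin θ) ^ 2 / 2)) := by
              ring
          _ = (2 * π)⁻¹ * Real.exp (-(r ^ 2) / 2) := by rw [e1, e2]
      have harg : ρ * (r * Real.cos θ) + Real.sqrt (1 - ρ ^ 2) * (r * Real.sin θ)
          = r * Real.cos (θ - α) := by
        rw [hsin, Real.cos_sub, ← hcos]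
        ring
      rw [hpdf, harg, obSign_smul hr', obSign_smul hr', smul_eq_mul]
      ring)]
  rw [Measure.volume_eq_prod,
    setIntegral_prod_mul (fun r : ℝ => r * Real.exp (-(r ^ 2) / 2))
      (fun θ : ℝ => (2 * π)⁻¹ * (obSign (Real.cos θ) * obSign (Real.cos (θ - α))))
      (Set.Ioi 0) (Set.Ioo (-π) π),
    radial_integral, one_mul, integral_const_mul, angular α hα0 hαπ]
  have harcsin : Real.arcsin ρ = π / 2 - α := by
    rw [hα, Real.arccos_eq_pi_div_two_sub_arcsin]
    ring
  rw [harcsin]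
  field_simp
  ring
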